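/- The Huber effective loss L_λ(r) (equal to r²/2 for |r| ≤ λ and λ|r| - λ²/2 otherwise) is Fisher consistent for the mean under symmetric distributions: if U is an integrable random variable with a distribution symmetric about θ and E[L_λ(U - t)] is finite for all t, then t = θ minimizes t ↦ E[L_λ(U - t)]. -/
import Mathlib


open MeasureTheory

/-- The Huber loss with bending constant `λ`. -/
noncomputable def huberLoss (lam r : ℝ) : ℝ :=
  if |r| ≤ lam then r^2 / 2 else lam * |r| - lam^2 / 2

lemma huber_even (lam r : ℝ) : huberLoss lam (-r) = huberLoss lam r := by
  simp [huberLoss, abs_neg, neg_sq]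

lemma huber_measurable (lam : ℝ) : Measurable (huberLoss lam) := by
  unfold huberLoss
  apply Measurable.ite
  · exact measurableSet_le (measurable_id.abs) measurable_const
  · fun_prop
  · fun_prop

set_option maxHeartbeats 1000000 in
lemma huber_midpoint {lam : ℝ} (hlam : 0 < lam) (x s : ℝ) :
    2 * huberLoss lam x ≤ huberLoss lam (x - s) + huberLoss lam (x + s) := by
  have h1 : 2 * |x| ≤ |x - s| + |x + s| := by
    have e : (x - s) + (x + s) = 2 * x := by ring
    have h2 : |(x - s) + (x + s)| = 2 * |x| := by
      rw [e, abs_mul, abs_of_nonneg (by norm_num : (0:ℝ) ≤ 2)]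
    linarith [abs_add_le (x - s) (x + s)]
  have sa : |x|^2 = x^2 := sq_abs x
  have sb : |x - s|^2 = (x - s)^2 := sq_abs _
  have sc : |x + s|^2 = (x + s)^2 := sq_abs _
  have na : 0 ≤ |x| := abs_nonneg x
  have nb : 0 ≤ |x - s| := abs_nonneg _
  have nc : 0 ≤ |x + s| := abs_nonneg _
  unfold huberLoss
  rcases le_or_gt |x| lam with ha | ha <;> rcases le_or_gt |x - s| lam with hb | hb <;>
    rcases le_or_gt |x + s| lam with hc | hc
  · rw [if_pos ha, if_pos hb, if_pos hc]; nlinarith [sq_nonneg s]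
  · rw [if_pos ha, if_pos hb, if_neg (not_le.mpr hc)]
    nlinarith [mul_nonneg (le_of_lt (sub_pos.mpr hc)) (by linarith : (0:ℝ) ≤ |x-s|+|x+s|-2*|x|),
      mul_nonneg hlam.le (le_of_lt (sub_pos.mpr hc)),
      sq_nonneg (|x-s| - lam), sq_nonneg (|x| - lam), sq_nonneg (2*|x| - |x-s| - lam),
      sq_nonneg (|x-s| + lam - 2*|x|)]
  · rw [if_pos ha, if_neg (not_le.mpr hb), if_pos hc]
    nlinarith [mul_nonneg (le_of_lt (sub_pos.mpr hb)) (by linarith : (0:ℝ) ≤ |x-s|+|x+s|-2*|x|),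
      mul_nonneg hlam.le (le_of_lt (sub_pos.mpr hb)),
      sq_nonneg (|x+s| - lam), sq_nonneg (|x| - lam), sq_nonneg (2*|x| - |x+s| - lam),
      sq_nonneg (|x+s| + lam - 2*|x|)]
  · rw [if_pos ha, if_neg (not_le.mpr hb), if_neg (not_le.mpr hc)]
    nlinarith [mul_nonneg hlam.le (le_of_lt (sub_pos.mpr hb)),
      mul_nonneg hlam.le (le_of_lt (sub_pos.mpr hc))]
  · linarith
  · rw [if_neg (not_le.mpr ha), if_pos hb, if_neg (not_le.mpr hc)]
    nlinarith [sq_nonneg (|x-s| - lam), mul_nonneg hlam.le (by linarith : (0:ℝ) ≤ |x-s|+|x+s|-2*|x|)]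
  · rw [if_neg (not_le.mpr ha), if_neg (not_le.mpr hb), if_pos hc]
    nlinarith [sq_nonneg (|x+s| - lam), mul_nonneg hlam.le (by linarith : (0:ℝ) ≤ |x-s|+|x+s|-2*|x|)]
  · rw [if_neg (not_le.mpr ha), if_neg (not_le.mpr hb), if_neg (not_le.mpr hc)]
    nlinarith [mul_nonneg hlam.le (by linarith : (0:ℝ) ≤ |x-s|+|x+s|-2*|x|)]

/-- Fisher consistency of the Huber loss for the center of a symmetric distribution:
if `U` is symmetric about `θ`, then `t = θ` minimizes `t ↦ E[huberLoss λ (U - t)]`. -/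
theorem huber_fisher_consistent_symmetric {Ω : Type*} [MeasureSpace Ω]
    [IsProbabilityMeasure (MeasureTheory.volume : Measure Ω)]
    (lam : ℝ) (hlam : 0 < lam) (U : Ω → ℝ) (hmeas : Measurable U)
    (hint : Integrable U) (θ : ℝ)
    (hsymm : Measure.map (fun ω => U ω - θ) MeasureTheory.volume =
      Measure.map (fun ω => θ - U ω) MeasureTheory.volume)
    (hloss : ∀ t : ℝ, Integrable (fun ω => huberLoss lam (U ω - t))) :
    ∀ t : ℝ, ∫ ω, huberLoss lam (U ω - θ) ≤ ∫ ω, huberLoss lam (U ω - t) := by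
  intro t
  set s : ℝ := t - θ with hs
  have hm : Measurable fun x : ℝ => huberLoss lam (x - s) :=
    (huber_measurable lam).comp (measurable_id.sub_const s)
  have key : ∫ ω, huberLoss lam (U ω - t) = ∫ ω, huberLoss lam (U ω - (2*θ - t)) := by
    have h1 : ∫ ω, huberLoss lam ((U ω - θ) - s) =
        ∫ x, huberLoss lam (x - s) ∂(Measure.map (fun ω => U ω - θ) volume) :=
      (integral_map (hmeas.sub_const θ).aemeasurable hm.aestronglyMeasurable).symm
    have h2 : ∫ x, huberLoss lam (x - s) ∂(Measure.map (fun ω => θ - U ω) volume) =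
        ∫ ω, huberLoss lam ((θ - U ω) - s) :=
      integral_map (measurable_const.sub hmeas).aemeasurable hm.aestronglyMeasurable
    have h3 : ∀ ω, huberLoss lam ((θ - U ω) - s) = huberLoss lam (U ω - (2*θ - t)) := by
      intro ω
      have e : (θ - U ω) - s = -(U ω - (2*θ - t)) := by rw [hs]; ring
      rw [e, huber_even]
    have h4 : ∀ ω, huberLoss lam (U ω - t) = huberLoss lam ((U ω - θ) - s) := by
      intro ω; congr 1; rw [hs]; ring
    calc ∫ ω, huberLoss lam (U ω - t) = ∫ ω, huberLoss lam ((U ω - θ) - s) := by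
          simp_rw [h4]
      _ = ∫ x, huberLoss lam (x - s) ∂(Measure.map (fun ω => U ω - θ) volume) := h1
      _ = ∫ x, huberLoss lam (x - s) ∂(Measure.map (fun ω => θ - U ω) volume) := by rw [hsymm]
      _ = ∫ ω, huberLoss lam ((θ - U ω) - s) := h2
      _ = ∫ ω, huberLoss lam (U ω - (2*θ - t)) := by simp_rw [h3]
  have mono : ∫ ω, 2 * huberLoss lam (U ω - θ) ≤
      ∫ ω, (huberLoss lam (U ω - t) + huberLoss lam (U ω - (2*θ - t))) := by
    apply integral_mono ((hloss θ).const_mul 2) ((hloss t).add (hloss (2*θ - t)))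
    intro ω
    have h := huber_midpoint hlam (U ω - θ) s
    have e1 : (U ω - θ) - s = U ω - t := by rw [hs]; ring
    have e2 : (U ω - θ) + s = U ω - (2*θ - t) := by rw [hs]; ring
    rw [e1, e2] at h
    exact h
  rw [integral_const_mul, integral_add (hloss t) (hloss (2*θ - t)), ← key] at mono
  linarith
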